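/- Let λ ⊢ n, let M be a semistandard tableau of shape λ with nonnegative entries, and let T be a tableau of shape λ with content {1,...,n}. Let ιT be the tableau of shape λ₊ (λ with a box added at the end of the first row) obtained by placing n+1 in the new box, and ι̂M the semistandard tableau of shape λ₊ obtained by shifting the first row of M right and placing 0 in the upper-left corner. Then F_{ι̂M, ιT} = ε_{ιT}(p_{M,T}) / s_{ι̂M,ιT}, and substituting x_{n+1} = 0 into F_{ι̂M,ιT} yields F_{M,T}. -/

import Mathlib

open MvPolynomial

noncomputable section
open scoped Classical

namespace GHS

def entrySumF (μ : YoungDiagram) (f : ℕ → ℕ → ℕ) : ℕ := ∑ c ∈ μ.cells, f c.1 c.2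

def entryFun {μ : YoungDiagram} (M : SemistandardYoungTableau μ) : ℕ → ℕ → ℕ := fun r c => M r c

def entrySum {μ : YoungDiagram} (M : SemistandardYoungTableau μ) : ℕ := entrySumF μ (entryFun M)

def entryMultisetF (μ : YoungDiagram) (f : ℕ → ℕ → ℕ) : Multiset ℕ :=
  μ.cells.val.map fun c => f c.1 c.2

def entryMultiset {μ : YoungDiagram} (M : SemistandardYoungTableau μ) : Multiset ℕ := entryMultisetF μ (entryFun M)

def countLtF (μ : YoungDiagram) (f : ℕ → ℕ → ℕ) (h : ℕ) : ℕ :=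
  (μ.cells.filter fun c => f c.1 c.2 < h).card

def countGe {μ : YoungDiagram} (M : SemistandardYoungTableau μ) (t : ℕ) : ℕ :=
  (μ.cells.filter fun c => t ≤ M c.1 c.2).card

def maxEntryF (μ : YoungDiagram) (f : ℕ → ℕ → ℕ) : ℕ := μ.cells.sup fun c => f c.1 c.2

def DspCF (n : ℕ) (μ : YoungDiagram) (f : ℕ → ℕ → ℕ) : Multiset ℕ :=
  (Finset.Icc 1 (maxEntryF μ f)).val.map fun h => n - countLtF μ f h

def DspC (n : ℕ) {μ : YoungDiagram} (M : SemistandardYoungTableau μ) : Multiset ℕ := DspCF n μ (entryFun M)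

def stdFun (μ : YoungDiagram) (f : ℕ → ℕ → ℕ) : ℕ → ℕ → ℕ := fun r c =>
  if (r, c) ∈ μ then
    (μ.cells.filter fun c' => f c'.1 c'.2 < f r c ∨ (f c'.1 c'.2 = f r c ∧ c'.2 < c)).card + 1
  else 0

def IsStandard (n : ℕ) {μ : YoungDiagram} (S : SemistandardYoungTableau μ) : Prop :=
  entryMultiset S = (Multiset.range n).map (· + 1)

def rowOfF (f : ℕ → ℕ → ℕ) (v : ℕ) : ℕ := sInf {r | ∃ c, f r c = v}

def DsiSet (n : ℕ) {μ : YoungDiagram} (S : SemistandardYoungTableau μ) : Finset ℕ :=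
  (Finset.Ioo 0 n).filter fun i => rowOfF (entryFun S) i < rowOfF (entryFun S) (i + 1)

def jseq (n k : ℕ) (J : Multiset ℕ) (h : ℕ) : ℕ :=
  if h = 0 then 0 else if h = k then n else (J.sort (· ≤ ·)).getD (h - 1) 0

def compFun (n k : ℕ) (J : Multiset ℕ) (h : ℕ) : ℕ := jseq n k J (h + 1) - jseq n k J h

def compMap (n k : ℕ) (J : Multiset ℕ) : Fin k → ℕ := fun h => compFun n k J (h : ℕ)

def contentOfJ (n k : ℕ) (J : Multiset ℕ) : Multiset ℕ :=
  (Multiset.range k).bind fun h => Multiset.replicate (compFun n k J h) h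

def IsTabloid (n : ℕ) (μ : YoungDiagram) (T : Fin n → ℕ × ℕ) : Prop :=
  Function.Injective T ∧ ∀ i, T i ∈ μ

def IsStdFill (n : ℕ) (T : Fin n → ℕ × ℕ) : Prop :=
  ∀ i j : Fin n,
    (((T i).1 = (T j).1 ∧ (T i).2 < (T j).2) ∨ ((T i).2 = (T j).2 ∧ (T i).1 < (T j).1)) → i < j

def rowGroup (n : ℕ) (T : Fin n → ℕ × ℕ) : Finset (Equiv.Perm (Fin n)) :=
  Finset.univ.filter fun τ => ∀ i, (T (τ i)).1 = (T i).1

def colGroup (n : ℕ) (T : Fin n → ℕ × ℕ) : Finset (Equiv.Perm (Fin n)) :=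
  Finset.univ.filter fun σ => ∀ i, (T (σ i)).2 = (T i).2

def pmonF (n : ℕ) (f : ℕ → ℕ → ℕ) (T : Fin n → ℕ × ℕ) : MvPolynomial (Fin n) ℚ :=
  ∏ i, X i ^ f (T i).1 (T i).2

def pexpF (n : ℕ) (f : ℕ → ℕ → ℕ) (T : Fin n → ℕ × ℕ) : Fin n →₀ ℕ :=
  Finsupp.equivFunOnFinite.symm fun i => f (T i).1 (T i).2

def symRT (n : ℕ) (T : Fin n → ℕ × ℕ) (p : MvPolynomial (Fin n) ℚ) : MvPolynomial (Fin n) ℚ :=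
  ∑ τ ∈ rowGroup n T, rename (⇑τ) p

def antisym (n : ℕ) (T : Fin n → ℕ × ℕ) (p : MvPolynomial (Fin n) ℚ) : MvPolynomial (Fin n) ℚ :=
  ∑ σ ∈ colGroup n T, ((Equiv.Perm.sign σ : ℤ) : ℚ) • rename (⇑σ) p

def youngSym (n : ℕ) (T : Fin n → ℕ × ℕ) (p : MvPolynomial (Fin n) ℚ) : MvPolynomial (Fin n) ℚ :=
  antisym n T (symRT n T p)

def stabCardF (n : ℕ) (f : ℕ → ℕ → ℕ) (T : Fin n → ℕ × ℕ) : ℕ :=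
  ((rowGroup n T).filter fun τ : Equiv.Perm (Fin n) => rename (⇑τ) (pmonF n f T) = pmonF n f T).card

def rowPoly (n : ℕ) (f : ℕ → ℕ → ℕ) (T : Fin n → ℕ × ℕ) : MvPolynomial (Fin n) ℚ :=
  (stabCardF n f T : ℚ)⁻¹ • symRT n T (pmonF n f T)

def FMTF (n : ℕ) (f : ℕ → ℕ → ℕ) (T : Fin n → ℕ × ℕ) : MvPolynomial (Fin n) ℚ :=
  (stabCardF n f T : ℚ)⁻¹ • youngSym n T (pmonF n f T)

def FMT (n : ℕ) {μ : YoungDiagram} (M : SemistandardYoungTableau μ) (T : Fin n → ℕ × ℕ) : MvPolynomial (Fin n) ℚ :=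
  FMTF n (entryFun M) T

def degT (n : ℕ) (T : Fin n → ℕ × ℕ) (d : Fin n →₀ ℕ) (j : ℕ) : ℕ :=
  ∑ i ∈ Finset.univ.filter fun i => (T i).2 = j, d i

def gtT (n : ℕ) (T : Fin n → ℕ × ℕ) (d e : Fin n →₀ ℕ) : Prop :=
  ∃ j, degT n T e j < degT n T d j ∧ ∀ j', j < j' → degT n T d j' = degT n T e j'

def VMF (n : ℕ) (μ : YoungDiagram) (f : ℕ → ℕ → ℕ) : Submodule ℚ (MvPolynomial (Fin n) ℚ) :=
  Submodule.span ℚ {p | ∃ T, IsTabloid n μ T ∧ p = FMTF n f T}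

def VM (n : ℕ) {μ : YoungDiagram} (M : SemistandardYoungTableau μ) : Submodule ℚ (MvPolynomial (Fin n) ℚ) :=
  VMF n μ (entryFun M)

def spechtP (n : ℕ) (T : Fin n → ℕ × ℕ) : MvPolynomial (Fin n) ℚ := ∏ i, X i ^ (T i).1

def SpechtSub (n : ℕ) (μ : YoungDiagram) : Submodule ℚ (MvPolynomial (Fin n) ℚ) :=
  Submodule.span ℚ {p | ∃ T, IsTabloid n μ T ∧ p = youngSym n T (spechtP n T)}

def EqHoms (n : ℕ) (W V : Submodule ℚ (MvPolynomial (Fin n) ℚ)) :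
    Submodule ℚ (W →ₗ[ℚ] MvPolynomial (Fin n) ℚ) where
  carrier := {g | (∀ x, g x ∈ V) ∧ ∀ (σ : Equiv.Perm (Fin n)) (x y : W),
      (y : MvPolynomial (Fin n) ℚ) = rename (⇑σ) (x : MvPolynomial (Fin n) ℚ) →
      g y = rename (⇑σ) (g x)}
  add_mem' := by
    rintro a b ⟨ha1, ha2⟩ ⟨hb1, hb2⟩
    refine ⟨fun x => ?_, fun σ x y hxy => ?_⟩
    · simpa using V.add_mem (ha1 x) (hb1 x)
    · simp [LinearMap.add_apply, map_add, ha2 σ x y hxy, hb2 σ x y hxy]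
  zero_mem' := ⟨fun x => by simp, fun σ x y hxy => by simp⟩
  smul_mem' := by
    rintro c a ⟨ha1, ha2⟩
    refine ⟨fun x => ?_, fun σ x y hxy => ?_⟩
    · simpa using V.smul_mem c (ha1 x)
    · simp [LinearMap.smul_apply, map_smul, ha2 σ x y hxy]

def multiplicityIn (n : ℕ) (W V : Submodule ℚ (MvPolynomial (Fin n) ℚ)) : ℕ :=
  Module.finrank ℚ ↑(EqHoms n W V)

def contentSub (n : ℕ) (μc : Multiset ℕ) : Submodule ℚ (MvPolynomial (Fin n) ℚ) :=
  Submodule.span ℚ {p | ∃ d : Fin n → ℕ, Finset.univ.val.map d = μc ∧ p = ∏ i, X i ^ d i}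

def padded (n : ℕ) (μc : Multiset ℕ) : Multiset ℕ :=
  μc + Multiset.replicate (n - Multiset.card μc) 0

def IsCocharge {μ : YoungDiagram} (C : SemistandardYoungTableau μ) : Prop :=
  ∀ h : ℕ, 0 < h → ∀ v ∈ μ.cells, C v.1 v.2 = h →
    (∀ v' ∈ μ.cells, C v'.1 v'.2 = h → v.2 ≤ v'.2) →
    ∃ v'' ∈ μ.cells, C v''.1 v''.2 = h - 1 ∧ v''.1 < v.1

def updF (f : ℕ → ℕ → ℕ) (r c v : ℕ) : ℕ → ℕ → ℕ :=
  fun r' c' => if r' = r ∧ c' = c then v else f r' c'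

def slide : ℕ → (ℕ → ℕ → ℕ) → ℕ × ℕ → (ℕ → ℕ → ℕ) × (ℕ × ℕ)
  | 0, f, p => (f, p)
  | fuel + 1, f, (r, c) =>
    let down := f (r + 1) c
    let right := f r (c + 1)
    if down = 0 ∧ right = 0 then (f, (r, c))
    else if right = 0 ∨ (down ≠ 0 ∧ down < right) then
      slide fuel (updF (updF f r c down) (r + 1) c 0) (r + 1, c)
    else
      slide fuel (updF (updF f r c right) r (c + 1) 0) (r, c + 1)

def evacAux : ℕ → (ℕ → ℕ → ℕ) → ℕ → ℕ → ℕ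
  | 0, _ => fun _ _ => 0
  | m + 1, f =>
    let gp := slide (m + 1) (updF f 0 0 0) (0, 0)
    updF (evacAux m gp.1) gp.2.1 gp.2.2 (m + 1)

def ctJfun (J : Multiset ℕ) (f : ℕ → ℕ → ℕ) : ℕ → ℕ → ℕ :=
  fun r c => J.countP fun j => j < f r c

def JminF (μ : YoungDiagram) (f : ℕ → ℕ → ℕ) : Multiset ℕ :=
  (Finset.Icc 1 (maxEntryF μ f)).val.map fun h => countLtF μ f h

def deltaOne (n : ℕ) (μ : YoungDiagram) (f : ℕ → ℕ → ℕ) (v : ℕ × ℕ) : Prop :=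
  ¬ (rowOfF (evacAux n (stdFun μ f)) n < v.1)

def hatAdd (n : ℕ) (μ : YoungDiagram) (f : ℕ → ℕ → ℕ) (v : ℕ × ℕ) : ℕ → ℕ → ℕ :=
  let Sv := evacAux (n + 1) (updF (evacAux n (stdFun μ f)) v.1 v.2 (n + 1))
  let Jp : Multiset ℕ := (JminF μ f).map (· + 1)
  if deltaOne n μ f v then ctJfun Jp Sv else ctJfun (1 ::ₘ Jp) Sv

def iotaHatFun (f : ℕ → ℕ → ℕ) : ℕ → ℕ → ℕ :=
  fun r c => if r = 0 then (if c = 0 then 0 else f 0 (c - 1)) else f r c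

def iotaT (n : ℕ) (lam : YoungDiagram) (T : Fin n → ℕ × ℕ) : Fin (n + 1) → ℕ × ℕ :=
  fun i => if h : (i : ℕ) < n then T ⟨(i : ℕ), h⟩ else (0, lam.rowLen 0)

def plusOneF (μ : YoungDiagram) (f : ℕ → ℕ → ℕ) : ℕ → ℕ → ℕ :=
  fun r c => if (r, c) ∈ μ then f r c + 1 else 0

def Omega (n : ℕ) (α : ℕ → ℕ) :=
  {w : Fin n → ℕ // ∀ h, (Finset.univ.filter fun i => w i = h).card = α h}

def shiftW (n : ℕ) (α : ℕ → ℕ) (σ : Equiv.Perm (Fin n)) (w : Omega n α) : Omega n α :=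
  ⟨fun i => w.1 (σ.symm i), by
    intro h
    have key : (Finset.univ.filter fun i => w.1 (σ.symm i) = h)
        = (Finset.univ.filter fun i => w.1 i = h).image σ := by
      ext i
      simp only [Finset.mem_filter, Finset.mem_univ, true_and, Finset.mem_image]
      constructor
      · intro hi
        exact ⟨σ.symm i, hi, Equiv.apply_symm_apply σ i⟩
      · rintro ⟨j, hj, rfl⟩
        simpa using hj
    rw [key, Finset.card_image_of_injective _ σ.injective]
    exact w.2 h⟩

def permOmega (n : ℕ) (α : ℕ → ℕ) (σ : Equiv.Perm (Fin n)) : Omega n α ≃ Omega n α where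
  toFun := shiftW n α σ
  invFun := shiftW n α σ⁻¹
  left_inv w := by
    apply Subtype.ext
    funext i
    simp [shiftW, Equiv.Perm.inv_def]
  right_inv w := by
    apply Subtype.ext
    funext i
    simp [shiftW, Equiv.Perm.inv_def]

def ExtPart (n d : ℕ) : Submodule ℚ (MvPolynomial (Fin (n + 1)) ℚ) :=
  ⨆ (lam : YoungDiagram) (_ : lam.card = n) (M : SemistandardYoungTableau lam) (_ : entrySum M = d)
    (v : ℕ × ℕ) (_ : v ∉ lam.cells) (ν : YoungDiagram) (_ : ν.cells = insert v lam.cells)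
    (_ : deltaOne n lam (entryFun M) v),
    VMF (n + 1) ν (hatAdd n lam (entryFun M) v)

def LEPart (n d : ℕ) : Submodule ℚ (MvPolynomial (Fin (n + 1)) ℚ) :=
  ⨆ (lam : YoungDiagram) (_ : lam.card = n) (M : SemistandardYoungTableau lam) (_ : entrySum M + n = d)
    (v : ℕ × ℕ) (_ : v ∉ lam.cells) (ν : YoungDiagram) (_ : ν.cells = insert v lam.cells)
    (_ : ¬ deltaOne n lam (entryFun M) v),
    VMF (n + 1) ν (hatAdd n lam (entryFun M) v)

def EPart (n d : ℕ) : Submodule ℚ (MvPolynomial (Fin (n + 1)) ℚ) :=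
  ⨆ (e : ℕ) (_ : e + (n + 1) = d),
    (homogeneousSubmodule (Fin (n + 1)) ℚ e).map
      (LinearMap.mulLeft ℚ (∏ i : Fin (n + 1), (X i : MvPolynomial (Fin (n + 1)) ℚ)))


/-! ### Auxiliary lemmas -/

section AuxExt

def castEquiv (n : ℕ) : Fin n ≃ {j : Fin (n+1) // (j:ℕ) < n} where
  toFun i := ⟨Fin.castSucc i, i.isLt⟩
  invFun j := ⟨(j.1 : ℕ), j.2⟩
  left_inv _ := rfl
  right_inv _ := rfl

def extPerm {n : ℕ} (τ : Equiv.Perm (Fin n)) : Equiv.Perm (Fin (n+1)) :=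
  τ.extendDomain (castEquiv n)

lemma extPerm_castSucc {n : ℕ} (τ : Equiv.Perm (Fin n)) (i : Fin n) :
    extPerm τ (Fin.castSucc i) = Fin.castSucc (τ i) :=
  Equiv.Perm.extendDomain_apply_image τ (castEquiv n) i

lemma extPerm_last {n : ℕ} (τ : Equiv.Perm (Fin n)) :
    extPerm τ (Fin.last n) = Fin.last n :=
  Equiv.Perm.extendDomain_apply_not_subtype τ (castEquiv n) (lt_irrefl n)

lemma extPerm_inv {n : ℕ} (τ : Equiv.Perm (Fin n)) : (extPerm τ)⁻¹ = extPerm τ⁻¹ :=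
  τ.extendDomain_inv (castEquiv n)

lemma extPerm_sign {n : ℕ} (τ : Equiv.Perm (Fin n)) :
    Equiv.Perm.sign (extPerm τ) = Equiv.Perm.sign τ :=
  Equiv.Perm.sign_extendDomain τ (castEquiv n)

lemma extPerm_one {n : ℕ} : extPerm (1 : Equiv.Perm (Fin n)) = 1 := by
  ext j
  rcases Fin.eq_castSucc_or_eq_last j with ⟨i, rfl⟩ | rfl
  · simp [extPerm_castSucc]
  · simp [extPerm_last]

lemma extPerm_injective {n : ℕ} : Function.Injective (extPerm (n := n)) := by
  intro a b h
  ext i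
  have := congrArg (fun σ : Equiv.Perm (Fin (n+1)) => σ (Fin.castSucc i)) h
  simp only [extPerm_castSucc, Fin.castSucc_inj] at this
  exact congrArg Fin.val this

lemma exists_extPerm {n : ℕ} (σ : Equiv.Perm (Fin (n+1))) (h : σ (Fin.last n) = Fin.last n) :
    ∃ τ : Equiv.Perm (Fin n), σ = extPerm τ := by
  have hinv : σ⁻¹ (Fin.last n) = Fin.last n := by
    rw [Equiv.Perm.inv_eq_iff_eq, h]
  have hlt : ∀ (g : Equiv.Perm (Fin (n+1))), g (Fin.last n) = Fin.last n →
      ∀ i : Fin n, (g (Fin.castSucc i) : ℕ) < n := by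
    intro g hg i
    refine Fin.val_lt_last fun he => ?_
    have := g.injective (he.trans hg.symm)
    exact (Fin.castSucc_lt_last i).ne this
  refine ⟨⟨fun i => ⟨σ (Fin.castSucc i), hlt σ h i⟩,
    fun i => ⟨σ⁻¹ (Fin.castSucc i), hlt σ⁻¹ hinv i⟩, fun i => ?_, fun i => ?_⟩, ?_⟩
  · apply Fin.ext
    have : Fin.castSucc (⟨(σ (Fin.castSucc i) : ℕ), hlt σ h i⟩ : Fin n) = σ (Fin.castSucc i) :=
      Fin.ext rfl
    simp [this]
  · apply Fin.ext
    have : Fin.castSucc (⟨(σ⁻¹ (Fin.castSucc i) : ℕ), hlt σ⁻¹ hinv i⟩ : Fin n) = σ⁻¹ (Fin.castSucc i) :=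
      Fin.ext rfl
    simp [this]
  · ext j
    rcases Fin.eq_castSucc_or_eq_last j with ⟨i, rfl⟩ | rfl
    · rw [extPerm_castSucc]
      show _ = Fin.val (Fin.castSucc (⟨(σ (Fin.castSucc i) : ℕ), hlt σ h i⟩ : Fin n))
      rfl
    · rw [extPerm_last, h]

end AuxExt

section AuxPoly

lemma prod_univ_X_pow {N : ℕ} (D : Fin N →₀ ℕ) :
    (∏ i, (X i : MvPolynomial (Fin N) ℚ) ^ D i) = monomial D 1 := by
  rw [← prod_X_pow_eq_monomial]
  exact (Finset.prod_subset (Finset.subset_univ _) (fun i _ hi => by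
    simp [Finsupp.notMem_support_iff.mp hi])).symm

lemma monomial_one_inj {N : ℕ} {D D' : Fin N →₀ ℕ}
    (h : monomial D (1:ℚ) = monomial D' 1) : D = D' :=
  monomial_left_injective one_ne_zero h

lemma rename_perm_monomial {N : ℕ} (g : Equiv.Perm (Fin N)) (D : Fin N →₀ ℕ) :
    rename ⇑g (monomial D (1:ℚ)) = monomial (D.mapDomain ⇑g) 1 :=
  rename_monomial _ _ _

lemma mapDomain_perm {N : ℕ} (g : Equiv.Perm (Fin N)) (D : Fin N →₀ ℕ) (j : Fin N) :
    D.mapDomain ⇑g j = D (g⁻¹ j) :=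
  Finsupp.mapDomain_equiv_apply (f := g) D j

lemma mapDomain_castSucc_apply {n : ℕ} (D : Fin n →₀ ℕ) (i : Fin n) :
    D.mapDomain Fin.castSucc (Fin.castSucc i) = D i :=
  Finsupp.mapDomain_apply (Fin.castSucc_injective n) D i

lemma mapDomain_castSucc_last {n : ℕ} (D : Fin n →₀ ℕ) :
    D.mapDomain Fin.castSucc (Fin.last n) = 0 :=
  Finsupp.mapDomain_notin_range D _ (by
    rintro ⟨i, hi⟩
    exact (Fin.castSucc_lt_last i).ne hi)

lemma finsupp_ext_last {n : ℕ} {D D' : Fin (n+1) →₀ ℕ}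
    (h1 : ∀ i : Fin n, D (Fin.castSucc i) = D' (Fin.castSucc i))
    (h2 : D (Fin.last n) = D' (Fin.last n)) : D = D' := by
  ext j
  rcases Fin.eq_castSucc_or_eq_last j with ⟨i, rfl⟩ | rfl
  · exact h1 i
  · exact h2

lemma pi_rename_castSucc {n : ℕ} (h : MvPolynomial (Fin n) ℚ) :
    (aeval fun j : Fin (n+1) =>
        if h2 : (j:ℕ) < n then (X (⟨(j:ℕ), h2⟩ : Fin n) : MvPolynomial (Fin n) ℚ) else 0)
      (rename Fin.castSucc h) = h := by
  rw [aeval_rename]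
  have hfun : ((fun j : Fin (n+1) =>
      if h2 : (j:ℕ) < n then (X (⟨(j:ℕ), h2⟩ : Fin n) : MvPolynomial (Fin n) ℚ) else 0)
      ∘ Fin.castSucc) = X := by
    funext i
    simp only [Function.comp_apply, Fin.coe_castSucc, i.isLt, dif_pos, Fin.eta]
  rw [hfun, aeval_X_left_apply]

lemma pi_monomial_last_ne {n : ℕ} (D : Fin (n+1) →₀ ℕ) (hD : D (Fin.last n) ≠ 0) :
    (aeval fun j : Fin (n+1) =>
        if h2 : (j:ℕ) < n then (X (⟨(j:ℕ), h2⟩ : Fin n) : MvPolynomial (Fin n) ℚ) else 0)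
      (monomial D (1:ℚ)) = 0 := by
  rw [aeval_monomial]
  have hmem : Fin.last n ∈ D.support := Finsupp.mem_support_iff.mpr hD
  rw [Finsupp.prod]
  rw [Finset.prod_eq_zero hmem]
  · simp
  · rw [show ((Fin.last n : Fin (n+1)) : ℕ) = n from rfl, dif_neg (lt_irrefl n)]
    exact zero_pow hD

lemma pexpF_apply (N : ℕ) (f : ℕ → ℕ → ℕ) (T : Fin N → ℕ × ℕ) (i : Fin N) :
    pexpF N f T i = f (T i).1 (T i).2 := rfl

lemma pmonF_eq_monomial (N : ℕ) (f : ℕ → ℕ → ℕ) (T : Fin N → ℕ × ℕ) :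
    pmonF N f T = monomial (pexpF N f T) 1 := by
  rw [← prod_univ_X_pow]
  rfl

end AuxPoly

section AuxGroup

lemma mem_rowGroup {N : ℕ} {T : Fin N → ℕ × ℕ} {σ : Equiv.Perm (Fin N)} :
    σ ∈ rowGroup N T ↔ ∀ i, (T (σ i)).1 = (T i).1 := by
  simp [rowGroup]

lemma mem_colGroup {N : ℕ} {T : Fin N → ℕ × ℕ} {σ : Equiv.Perm (Fin N)} :
    σ ∈ colGroup N T ↔ ∀ i, (T (σ i)).2 = (T i).2 := by
  simp [colGroup]

lemma one_mem_rowGroup {N : ℕ} (T : Fin N → ℕ × ℕ) : (1 : Equiv.Perm (Fin N)) ∈ rowGroup N T :=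
  mem_rowGroup.mpr fun _ => rfl

lemma mul_mem_rowGroup {N : ℕ} {T : Fin N → ℕ × ℕ} {σ τ : Equiv.Perm (Fin N)}
    (hσ : σ ∈ rowGroup N T) (hτ : τ ∈ rowGroup N T) : σ * τ ∈ rowGroup N T :=
  mem_rowGroup.mpr fun i => by
    rw [Equiv.Perm.mul_apply, mem_rowGroup.mp hσ, mem_rowGroup.mp hτ]

lemma inv_mem_rowGroup {N : ℕ} {T : Fin N → ℕ × ℕ} {σ : Equiv.Perm (Fin N)}
    (hσ : σ ∈ rowGroup N T) : σ⁻¹ ∈ rowGroup N T :=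
  mem_rowGroup.mpr fun i => by
    have := mem_rowGroup.mp hσ (σ⁻¹ i)
    rw [Equiv.Perm.coe_inv, Equiv.apply_symm_apply] at this
    exact this.symm

end AuxGroup

set_option maxHeartbeats 3200000 in
theorem stmt17 (n : ℕ) (hn : 1 ≤ n) (lam : YoungDiagram) (hcard : lam.card = n)
    (M : SemistandardYoungTableau lam) (T : Fin n → ℕ × ℕ) (hT : IsTabloid n lam T) :
    FMTF (n + 1) (iotaHatFun (entryFun M)) (iotaT n lam T) =
      (stabCardF (n + 1) (iotaHatFun (entryFun M)) (iotaT n lam T) : ℚ)⁻¹ •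
        youngSym (n + 1) (iotaT n lam T)
          (rename (fun i : Fin n => (Fin.castSucc i)) (pmonF n (entryFun M) T)) ∧
    (aeval fun i : Fin (n + 1) =>
        if h : (i : ℕ) < n then (X (⟨(i : ℕ), h⟩ : Fin n) : MvPolynomial (Fin n) ℚ) else 0)
      (FMTF (n + 1) (iotaHatFun (entryFun M)) (iotaT n lam T)) = FMT n M T := by
  classical
  obtain ⟨hTinj, hTmem⟩ := hT
  set f := entryFun M with hf
  set T' := iotaT n lam T with hT'def
  set L := lam.rowLen 0 with hLdef
  have hT'c : ∀ i : Fin n, T' (Fin.castSucc i) = T i := by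
    intro i
    rw [hT'def]
    simp only [iotaT, Fin.coe_castSucc, i.isLt, dif_pos, Fin.eta]
  have hT'l : T' (Fin.last n) = (0, L) := by
    rw [hT'def]
    simp only [iotaT, Fin.val_last, lt_irrefl, dif_neg, not_false_iff]
    rfl
  -- basic facts about the diagram
  have hcells : lam.cells.Nonempty := Finset.card_pos.mp (by
    show 0 < lam.cells.card
    have : lam.cells.card = n := hcard
    omega)
  obtain ⟨v, hv⟩ := hcells
  have h00 : (0, 0) ∈ lam := lam.up_left_mem (Nat.zero_le v.1) (Nat.zero_le v.2)
    (by simpa using (YoungDiagram.mem_cells v).mp hv)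
  have hL1 : 0 < L := by rw [hLdef]; exact YoungDiagram.mem_iff_lt_rowLen.mp h00
  have hcol : ∀ i, (T i).2 < L := by
    intro i
    have h1 : T i ∈ lam := hTmem i
    have h2 : (T i).2 < lam.rowLen (T i).1 := YoungDiagram.mem_iff_lt_rowLen.mp h1
    exact h2.trans_le (by rw [hLdef]; exact lam.rowLen_anti 0 (T i).1 (Nat.zero_le _))
  have himg : Finset.univ.image T = lam.cells := by
    apply Finset.eq_of_subset_of_card_le
    · intro w hw
      obtain ⟨i, _, rfl⟩ := Finset.mem_image.mp hw
      exact (YoungDiagram.mem_cells _).mpr (hTmem i)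
    · rw [Finset.card_image_of_injective _ hTinj, Finset.card_univ, Fintype.card_fin]
      exact le_of_eq hcard
  have hsurj : ∀ w ∈ lam.cells, ∃ i, T i = w := by
    intro w hw
    rw [← himg] at hw
    obtain ⟨i, _, h⟩ := Finset.mem_image.mp hw
    exact ⟨i, h⟩
  have hT'inj : Function.Injective T' := by
    intro a b hab
    rcases Fin.eq_castSucc_or_eq_last a with ⟨i, rfl⟩ | rfl <;>
      rcases Fin.eq_castSucc_or_eq_last b with ⟨j, rfl⟩ | rfl
    · rw [hT'c, hT'c] at hab
      exact congrArg Fin.castSucc (hTinj hab)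
    · rw [hT'c, hT'l] at hab
      exact absurd (congrArg Prod.snd hab) (by simpa using (hcol i).ne)
    · rw [hT'l, hT'c] at hab
      exact absurd (congrArg Prod.snd hab) (by simpa using (hcol j).ne')
    · rfl
  -- the bijection between row-zero boxes and columns 0..L
  have hrow0_col_le : ∀ j : Fin (n+1), (T' j).1 = 0 → (T' j).2 < L + 1 := by
    intro j hj
    rcases Fin.eq_castSucc_or_eq_last j with ⟨i, rfl⟩ | rfl
    · rw [hT'c]; exact (hcol i).trans (Nat.lt_succ_self L)
    · rw [hT'l]; exact Nat.lt_succ_self L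
  set gfun : {j : Fin (n+1) // (T' j).1 = 0} → Fin (L+1) :=
    fun j => ⟨(T' j.1).2, hrow0_col_le j.1 j.2⟩ with hgfun
  have hgbij : Function.Bijective gfun := by
    constructor
    · rintro ⟨a, ha⟩ ⟨b, hb⟩ hab
      have h2 : (T' a).2 = (T' b).2 := congrArg Fin.val hab
      exact Subtype.ext (hT'inj (Prod.ext (ha.trans hb.symm) h2))
    · rintro ⟨c, hc⟩
      rcases lt_or_eq_of_le (Nat.lt_succ_iff.mp hc) with hlt | heq
      · obtain ⟨i, hi⟩ := hsurj (0, c) ((YoungDiagram.mem_cells _).mpr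
          (YoungDiagram.mem_iff_lt_rowLen.mpr (by rw [← hLdef]; exact hlt)))
        refine ⟨⟨Fin.castSucc i, by rw [hT'c, hi]⟩, ?_⟩
        apply Fin.ext
        show (T' (Fin.castSucc i)).2 = c
        rw [hT'c, hi]
      · refine ⟨⟨Fin.last n, by rw [hT'l]⟩, ?_⟩
        apply Fin.ext
        show (T' (Fin.last n)).2 = c
        rw [hT'l]
        exact heq.symm
  set g := Equiv.ofBijective gfun hgbij with hgdef
  set τ0 : Equiv.Perm (Fin (n+1)) := (finRotate (L+1)).extendDomain g.symm with hτ0def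
  have hτ0_fix : ∀ j, (T' j).1 ≠ 0 → τ0 j = j := fun j h =>
    Equiv.Perm.extendDomain_apply_not_subtype _ g.symm h
  have hgsymm_row : ∀ b : Fin (L+1), (T' ((g.symm b : {j // (T' j).1 = 0}) : Fin (n+1))).1 = 0 :=
    fun b => (g.symm b).2
  have hgsymm_col : ∀ b : Fin (L+1),
      (T' ((g.symm b : {j // (T' j).1 = 0}) : Fin (n+1))).2 = (b : ℕ) :=
    fun b => congrArg Fin.val (g.apply_symm_apply b)
  have hτ0_app : ∀ b : Fin (L+1), τ0 ((g.symm b : {j // (T' j).1 = 0}) : Fin (n+1))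
      = ((g.symm (finRotate (L+1) b) : {j // (T' j).1 = 0}) : Fin (n+1)) :=
    fun b => Equiv.Perm.extendDomain_apply_image _ _ _
  -- exponent vectors
  set d : Fin n →₀ ℕ := pexpF n f T with hd
  set D₂ : Fin (n+1) →₀ ℕ := d.mapDomain Fin.castSucc with hD2def
  set D₁ : Fin (n+1) →₀ ℕ := pexpF (n+1) (iotaHatFun f) T' with hD1def
  have hD2c : ∀ i : Fin n, D₂ (Fin.castSucc i) = f (T i).1 (T i).2 := by
    intro i
    rw [hD2def, mapDomain_castSucc_apply, hd]
    rfl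
  have hD2l : D₂ (Fin.last n) = 0 := by rw [hD2def]; exact mapDomain_castSucc_last d
  have hD1a : ∀ j, D₁ j = iotaHatFun f (T' j).1 (T' j).2 := fun j => rfl
  have hDkey : ∀ j, D₁ (τ0 j) = D₂ j := by
    intro j
    rcases Fin.eq_castSucc_or_eq_last j with ⟨i, rfl⟩ | rfl
    · by_cases h0 : (T i).1 = 0
      · have hj : (T' (Fin.castSucc i)).1 = 0 := by rw [hT'c]; exact h0
        have hcast : Fin.castSucc i
            = ((g.symm (g ⟨Fin.castSucc i, hj⟩) : {j // (T' j).1 = 0}) : Fin (n+1)) := by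
          rw [g.symm_apply_apply]
        set b : Fin (L+1) := g ⟨Fin.castSucc i, hj⟩ with hb
        have hbval : (b : ℕ) = (T i).2 := by
          show (T' (Fin.castSucc i)).2 = (T i).2
          rw [hT'c]
        have happ : τ0 (Fin.castSucc i)
            = ((g.symm (finRotate (L+1) b) : {j // (T' j).1 = 0}) : Fin (n+1)) := by
          conv_lhs => rw [hcast]
          exact hτ0_app b
        have hblt : (b : ℕ) < L := by rw [hbval]; exact hcol i
        have hrot : ((finRotate (L+1) b : Fin (L+1)) : ℕ) = (b : ℕ) + 1 := by
          rw [finRotate_succ_apply, Fin.val_add_one_of_lt]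
          rw [Fin.lt_iff_val_lt_val, Fin.val_last]
          exact hblt
        rw [hD1a, happ, hgsymm_row, hgsymm_col, hrot]
        rw [hD2c i, h0]
        show iotaHatFun f 0 ((b : ℕ) + 1) = f 0 (T i).2

        unfold iotaHatFun
        simp [hbval]
      · have hj : (T' (Fin.castSucc i)).1 ≠ 0 := by rw [hT'c]; exact h0
        rw [hD1a, hτ0_fix _ hj, hT'c, hD2c i]
        unfold iotaHatFun
        rw [if_neg h0]
    · have hj : (T' (Fin.last n)).1 = 0 := by rw [hT'l]
      have hcast : Fin.last n
          = ((g.symm (g ⟨Fin.last n, hj⟩) : {j // (T' j).1 = 0}) : Fin (n+1)) := by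
        rw [g.symm_apply_apply]
      set b : Fin (L+1) := g ⟨Fin.last n, hj⟩ with hb
      have hbval : (b : ℕ) = L := by
        show (T' (Fin.last n)).2 = L
        rw [hT'l]
      have happ : τ0 (Fin.last n)
          = ((g.symm (finRotate (L+1) b) : {j // (T' j).1 = 0}) : Fin (n+1)) := by
        conv_lhs => rw [hcast]
        exact hτ0_app b
      have hrot : ((finRotate (L+1) b : Fin (L+1)) : ℕ) = 0 := by
        have hbl : b = Fin.last L := Fin.ext (by rw [hbval]; rfl)
        rw [hbl, finRotate_last]
        rfl
      rw [hD1a, happ, hgsymm_row, hgsymm_col, hrot, hD2l]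
      show iotaHatFun f 0 0 = 0
      unfold iotaHatFun
      simp
  have hτ0mem : τ0 ∈ rowGroup (n+1) T' := by
    refine mem_rowGroup.mpr (fun j => ?_)
    by_cases hj : (T' j).1 = 0
    · have hcast : j = ((g.symm (g ⟨j, hj⟩) : {j // (T' j).1 = 0}) : Fin (n+1)) := by
        rw [g.symm_apply_apply]
      have happ : τ0 j = ((g.symm (finRotate (L+1) (g ⟨j, hj⟩)) : {j // (T' j).1 = 0}) : Fin (n+1)) := by
        conv_lhs => rw [hcast]
        exact hτ0_app _
      rw [happ, hgsymm_row, hj]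
    · rw [hτ0_fix j hj]
  have hmapdom : D₂.mapDomain ⇑τ0 = D₁ := by
    ext j
    rw [mapDomain_perm]
    have h := hDkey (τ0⁻¹ j)
    rw [Equiv.Perm.coe_inv, Equiv.apply_symm_apply] at h
    exact h.symm
  have hq1 : pmonF (n+1) (iotaHatFun f) T' = monomial D₁ 1 := by
    rw [pmonF_eq_monomial, ← hD1def]
  have hq1q2 : monomial D₁ (1:ℚ) = rename ⇑τ0 (monomial D₂ 1) := by
    rw [rename_perm_monomial, hmapdom]
  have hq2 : rename (fun i : Fin n => (Fin.castSucc i)) (pmonF n f T) = monomial D₂ 1 := by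
    rw [pmonF_eq_monomial, rename_monomial, ← hd]
  have hsymRTeq : symRT (n+1) T' (monomial D₁ (1:ℚ)) = symRT (n+1) T' (monomial D₂ 1) := by
    unfold symRT
    rw [hq1q2]
    refine Finset.sum_nbij' (fun ρ => ρ * τ0) (fun ρ => ρ * τ0⁻¹) ?_ ?_ ?_ ?_ ?_
    · intro ρ hρ; exact mul_mem_rowGroup hρ hτ0mem
    · intro ρ hρ; exact mul_mem_rowGroup hρ (inv_mem_rowGroup hτ0mem)
    · intro ρ _; exact mul_inv_cancel_right ρ τ0
    · intro ρ _; exact inv_mul_cancel_right ρ τ0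
    · intro ρ _
      rw [rename_rename]
      rfl
  have part1 : FMTF (n + 1) (iotaHatFun f) T' =
      (stabCardF (n + 1) (iotaHatFun f) T' : ℚ)⁻¹ •
        youngSym (n + 1) T' (rename (fun i : Fin n => (Fin.castSucc i)) (pmonF n f T)) := by
    have hys : youngSym (n+1) T' (pmonF (n+1) (iotaHatFun f) T')
        = youngSym (n+1) T' (rename (fun i : Fin n => (Fin.castSucc i)) (pmonF n f T)) := by
      unfold youngSym
      rw [hq1, hq2, hsymRTeq]
    unfold FMTF
    rw [hys]
  refine ⟨part1, ?_⟩
  -- Part 2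
  set RG := rowGroup n T with hRGdef
  set RG' := rowGroup (n+1) T' with hRG'def
  set CG := colGroup n T with hCGdef
  set CG' := colGroup (n+1) T' with hCG'def
  set F0 : Finset (Fin (n+1)) := Finset.univ.filter (fun j => (T' j).1 = 0 ∧ D₂ j = 0)
    with hF0def
  have hmemF0 : ∀ j, j ∈ F0 ↔ ((T' j).1 = 0 ∧ D₂ j = 0) := by
    intro j
    rw [hF0def]
    simp
  set Ψ : Equiv.Perm (Fin n) → Fin (n+1) → Equiv.Perm (Fin (n+1)) :=
    fun τ i0 => extPerm τ * Equiv.swap (Fin.last n) i0 with hΨdef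
  have hΨ_app_last : ∀ τ i0, Ψ τ i0 (Fin.last n) = extPerm τ i0 := by
    intro τ i0
    rw [hΨdef]
    simp only [Equiv.Perm.mul_apply, Equiv.swap_apply_left]
  have hΨ_app_i0 : ∀ τ (i0 : Fin (n+1)), i0 ≠ Fin.last n → Ψ τ i0 i0 = Fin.last n := by
    intro τ i0 h
    rw [hΨdef]
    simp only [Equiv.Perm.mul_apply, Equiv.swap_apply_right, extPerm_last]
  have hΨ_app_other : ∀ τ i0 (j : Fin (n+1)), j ≠ Fin.last n → j ≠ i0 →
      Ψ τ i0 j = extPerm τ j := by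
    intro τ i0 j h1 h2
    rw [hΨdef]
    simp only [Equiv.Perm.mul_apply, Equiv.swap_apply_of_ne_of_ne h1 h2]
  have hΨinv_last : ∀ τ i0, (Ψ τ i0)⁻¹ (Fin.last n) = i0 := by
    intro τ i0
    rw [hΨdef]
    simp only [mul_inv_rev, Equiv.Perm.mul_apply, Equiv.swap_inv, extPerm_inv, extPerm_last,
      Equiv.swap_apply_left]
  have hΨmem : ∀ (τ : Equiv.Perm (Fin n)) (i0 : Fin (n+1)), i0 ∈ F0 →
      (Ψ τ i0 ∈ RG' ↔ τ ∈ RG) := by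
    intro τ i0 hi0
    obtain ⟨hrow0, hD0⟩ := (hmemF0 i0).mp hi0
    constructor
    · intro hmem
      refine mem_rowGroup.mpr (fun i => ?_)
      by_cases hc : Fin.castSucc i = i0
      · have h := mem_rowGroup.mp hmem (Fin.last n)
        rw [hΨ_app_last τ i0, ← hc, extPerm_castSucc, hT'c, hT'l] at h
        have h2 : (T i).1 = 0 := by rw [← hT'c i, hc]; exact hrow0
        rw [h2]
        exact h
      · have h := mem_rowGroup.mp hmem (Fin.castSucc i)
        rw [hΨ_app_other τ i0 _ (Fin.castSucc_lt_last i).ne hc, extPerm_castSucc, hT'c, hT'c] at h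
        exact h
    · intro hmem
      refine mem_rowGroup.mpr (fun j => ?_)
      rcases Fin.eq_castSucc_or_eq_last j with ⟨i, rfl⟩ | rfl
      · by_cases hc : Fin.castSucc i = i0
        · have hne : i0 ≠ Fin.last n := by rw [← hc]; exact (Fin.castSucc_lt_last i).ne
          rw [hc, hΨ_app_i0 τ i0 hne, hT'l]
          exact hrow0.symm
        · rw [hΨ_app_other τ i0 _ (Fin.castSucc_lt_last i).ne hc, extPerm_castSucc, hT'c, hT'c]
          exact mem_rowGroup.mp hmem i
      · rw [hΨ_app_last]
        rcases Fin.eq_castSucc_or_eq_last i0 with ⟨k, hk⟩ | hk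
        · rw [hk, extPerm_castSucc, hT'c, hT'l]
          rw [mem_rowGroup.mp hmem k, ← hT'c k, ← hk]
          exact hrow0
        · rw [hk, extPerm_last]
  have hbij : ∀ (Mo : Type) [AddCommMonoid Mo] (G : Equiv.Perm (Fin (n+1)) → Mo),
      ∑ ρ ∈ RG'.filter (fun ρ => D₂ (ρ⁻¹ (Fin.last n)) = 0), G ρ
        = ∑ x ∈ RG ×ˢ F0, G (Ψ x.1 x.2) := by
    intro Mo _ G
    refine (Finset.sum_nbij (fun x : Equiv.Perm (Fin n) × Fin (n+1) => Ψ x.1 x.2) ?_ ?_ ?_ fun _ _ => rfl).symm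
    · rintro ⟨τ, i0⟩ hx
      obtain ⟨hx1, hx2⟩ := Finset.mem_product.mp hx
      refine Finset.mem_filter.mpr ⟨(hΨmem τ i0 hx2).mpr hx1, ?_⟩
      rw [hΨinv_last]
      exact ((hmemF0 i0).mp hx2).2
    · rintro ⟨τ, i0⟩ _ ⟨τ', i0'⟩ _ hxy
      simp only at hxy
      have h0 : i0 = i0' := by
        rw [← hΨinv_last τ i0, ← hΨinv_last τ' i0', hxy]
      have h1 : τ = τ' := by
        apply extPerm_injective
        have := hxy
        rw [hΨdef] at this
        simp only at this
        rw [h0] at this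
        exact mul_right_cancel this
      rw [h0, h1]
    · intro ρ hρ
      have hρ' := Finset.mem_coe.mp hρ
      obtain ⟨hρ1, hρ2⟩ := Finset.mem_filter.mp hρ'
      have hi0row : (T' (ρ⁻¹ (Fin.last n))).1 = 0 := by
        have := mem_rowGroup.mp (inv_mem_rowGroup hρ1) (Fin.last n)
        rw [this, hT'l]
      have hi0F : ρ⁻¹ (Fin.last n) ∈ F0 := (hmemF0 _).mpr ⟨hi0row, hρ2⟩
      have hfix : (ρ * Equiv.swap (Fin.last n) (ρ⁻¹ (Fin.last n))) (Fin.last n) = Fin.last n := by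
        rw [Equiv.Perm.mul_apply, Equiv.swap_apply_left, Equiv.Perm.coe_inv, Equiv.apply_symm_apply]
      obtain ⟨τ, hτ⟩ := exists_extPerm _ hfix
      have hΨeq : Ψ τ (ρ⁻¹ (Fin.last n)) = ρ := by
        rw [hΨdef]
        simp only
        rw [← hτ, mul_assoc, Equiv.swap_mul_self, mul_one]
      refine ⟨(τ, ρ⁻¹ (Fin.last n)), ?_, hΨeq⟩
      refine Finset.mem_coe.mpr (Finset.mem_product.mpr ⟨?_, hi0F⟩)
      exact (hΨmem τ _ hi0F).mp (by rw [hΨeq]; exact hρ1)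
  have hD2d : ∀ k : Fin n, D₂ (Fin.castSucc k) = d k := by
    intro k
    rw [hD2def]
    exact mapDomain_castSucc_apply d k
  have hmono : ∀ (σ τ : Equiv.Perm (Fin n)) (i0 : Fin (n+1)), i0 ∈ F0 →
      rename ⇑(extPerm σ * Ψ τ i0) (monomial D₂ (1:ℚ))
        = rename Fin.castSucc (rename ⇑(σ * τ) (pmonF n f T)) := by
    intro σ τ i0 hi0
    obtain ⟨hrow0, hD0⟩ := (hmemF0 i0).mp hi0
    rw [pmonF_eq_monomial, ← hd, rename_perm_monomial, rename_perm_monomial, rename_monomial]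
    refine congrArg (fun E => monomial E (1:ℚ)) ?_
    refine finsupp_ext_last (fun i => ?_) ?_
    · rw [mapDomain_perm, mapDomain_castSucc_apply, mapDomain_perm]
      have hstep : (extPerm σ * Ψ τ i0)⁻¹ (Fin.castSucc i)
          = Equiv.swap (Fin.last n) i0 (Fin.castSucc (τ⁻¹ (σ⁻¹ i))) := by
        rw [mul_inv_rev, Equiv.Perm.mul_apply, extPerm_inv, extPerm_castSucc, hΨdef]
        simp only
        rw [mul_inv_rev, Equiv.swap_inv, Equiv.Perm.mul_apply, extPerm_inv, extPerm_castSucc]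
      rw [hstep]
      have hrhs : d ((σ * τ)⁻¹ i) = d (τ⁻¹ (σ⁻¹ i)) := by rw [mul_inv_rev]; rfl
      rw [hrhs]
      by_cases hc : Fin.castSucc (τ⁻¹ (σ⁻¹ i)) = i0
      · rw [hc, Equiv.swap_apply_right, hD2l]
        rw [← hc, hD2d] at hD0
        exact hD0.symm
      · rw [Equiv.swap_apply_of_ne_of_ne (Fin.castSucc_lt_last _).ne hc]
        exact hD2d _
    · rw [mapDomain_perm, mapDomain_castSucc_last]
      have hstep : (extPerm σ * Ψ τ i0)⁻¹ (Fin.last n) = i0 := by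
        rw [mul_inv_rev, Equiv.Perm.mul_apply, extPerm_inv, extPerm_last, hΨinv_last]
      rw [hstep, hD0]
  have hcolfix : ∀ σ', σ' ∈ CG' → σ' (Fin.last n) = Fin.last n := by
    intro σ' hσ'
    have h2 := mem_colGroup.mp hσ' (Fin.last n)
    rcases Fin.eq_castSucc_or_eq_last (σ' (Fin.last n)) with ⟨i, hi⟩ | hi
    · exfalso
      rw [hi, hT'c, hT'l] at h2
      exact absurd h2 (hcol i).ne
    · exact hi
  have hextCG : ∀ σ : Equiv.Perm (Fin n), extPerm σ ∈ CG' ↔ σ ∈ CG := by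
    intro σ
    constructor
    · intro h
      refine mem_colGroup.mpr fun i => ?_
      have := mem_colGroup.mp h (Fin.castSucc i)
      rwa [extPerm_castSucc, hT'c, hT'c] at this
    · intro h
      refine mem_colGroup.mpr fun j => ?_
      rcases Fin.eq_castSucc_or_eq_last j with ⟨i, rfl⟩ | rfl
      · rw [extPerm_castSucc, hT'c, hT'c]
        exact mem_colGroup.mp h i
      · rw [extPerm_last]
  have hCGbij : ∀ (Mo : Type) [AddCommMonoid Mo] (G : Equiv.Perm (Fin (n+1)) → Mo),
      ∑ σ' ∈ CG', G σ' = ∑ σ ∈ CG, G (extPerm σ) := by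
    intro Mo _ G
    refine (Finset.sum_nbij (fun σ => extPerm σ) (fun σ hσ => (hextCG σ).mpr hσ)
      (fun a _ b _ hab => extPerm_injective hab) ?_ fun _ _ => rfl).symm
    intro σ' hσ'
    have hσ'' := Finset.mem_coe.mp hσ'
    obtain ⟨τ, rfl⟩ := exists_extPerm σ' (hcolfix σ' hσ'')
    exact ⟨τ, Finset.mem_coe.mpr ((hextCG τ).mp hσ''), rfl⟩
  have hinner : ∀ σ : Equiv.Perm (Fin n),
      (∑ ρ ∈ RG', (aeval fun j : Fin (n + 1) =>
          if h : (j : ℕ) < n then (X (⟨(j : ℕ), h⟩ : Fin n) : MvPolynomial (Fin n) ℚ) else 0)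
          (rename ⇑(extPerm σ * ρ) (monomial D₂ (1:ℚ))))
        = (F0.card : ℚ) • ∑ τ ∈ RG, rename ⇑(σ * τ) (pmonF n f T) := by
    intro σ
    rw [← Finset.sum_filter_add_sum_filter_not RG' (fun ρ => D₂ (ρ⁻¹ (Fin.last n)) = 0)]
    have hzero : (∑ ρ ∈ RG'.filter (fun ρ => ¬ D₂ (ρ⁻¹ (Fin.last n)) = 0),
        (aeval fun j : Fin (n + 1) =>
          if h : (j : ℕ) < n then (X (⟨(j : ℕ), h⟩ : Fin n) : MvPolynomial (Fin n) ℚ) else 0)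
          (rename ⇑(extPerm σ * ρ) (monomial D₂ (1:ℚ)))) = 0 := by
      refine Finset.sum_eq_zero fun ρ hρ => ?_
      have hρ2 := (Finset.mem_filter.mp hρ).2
      rw [rename_perm_monomial]
      refine pi_monomial_last_ne _ ?_
      rw [mapDomain_perm, mul_inv_rev, Equiv.Perm.mul_apply, extPerm_inv, extPerm_last]
      exact hρ2
    rw [hzero, add_zero]
    rw [hbij _ (fun ρ => (aeval fun j : Fin (n + 1) =>
        if h : (j : ℕ) < n then (X (⟨(j : ℕ), h⟩ : Fin n) : MvPolynomial (Fin n) ℚ) else 0)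
        (rename ⇑(extPerm σ * ρ) (monomial D₂ (1:ℚ))))]
    rw [Finset.sum_product]
    have h1 : ∀ τ ∈ RG, (∑ i0 ∈ F0, (aeval fun j : Fin (n + 1) =>
        if h : (j : ℕ) < n then (X (⟨(j : ℕ), h⟩ : Fin n) : MvPolynomial (Fin n) ℚ) else 0)
        (rename ⇑(extPerm σ * Ψ τ i0) (monomial D₂ (1:ℚ))))
        = (F0.card : ℚ) • rename ⇑(σ * τ) (pmonF n f T) := by
      intro τ _
      rw [Finset.sum_congr rfl (fun i0 hi0 => by
        rw [hmono σ τ i0 hi0, pi_rename_castSucc])]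
      rw [Finset.sum_const, ← Nat.cast_smul_eq_nsmul ℚ]
    rw [Finset.sum_congr rfl h1, ← Finset.smul_sum]
  have hYS : (aeval fun j : Fin (n + 1) =>
      if h : (j : ℕ) < n then (X (⟨(j : ℕ), h⟩ : Fin n) : MvPolynomial (Fin n) ℚ) else 0)
      (youngSym (n+1) T' (rename (fun i : Fin n => (Fin.castSucc i)) (pmonF n f T)))
      = (F0.card : ℚ) • youngSym n T (pmonF n f T) := by
    unfold youngSym antisym symRT
    rw [hq2, map_sum]
    rw [hCGbij _ (fun σ' => (aeval fun j : Fin (n + 1) =>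
      if h : (j : ℕ) < n then (X (⟨(j : ℕ), h⟩ : Fin n) : MvPolynomial (Fin n) ℚ) else 0)
      (((Equiv.Perm.sign σ' : ℤ) : ℚ) • rename ⇑σ' (∑ ρ ∈ RG', rename ⇑ρ (monomial D₂ (1:ℚ)))))]
    have hterm : ∀ σ ∈ CG, (aeval fun j : Fin (n + 1) =>
        if h : (j : ℕ) < n then (X (⟨(j : ℕ), h⟩ : Fin n) : MvPolynomial (Fin n) ℚ) else 0)
        (((Equiv.Perm.sign (extPerm σ) : ℤ) : ℚ) •
          rename ⇑(extPerm σ) (∑ ρ ∈ RG', rename ⇑ρ (monomial D₂ (1:ℚ))))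
        = ((Equiv.Perm.sign σ : ℤ) : ℚ) •
            ((F0.card : ℚ) • ∑ τ ∈ RG, rename ⇑(σ * τ) (pmonF n f T)) := by
      intro σ _
      rw [extPerm_sign, map_smul]
      congr 1
      have h2 : ∀ ρ ∈ RG', (aeval fun j : Fin (n + 1) =>
          if h : (j : ℕ) < n then (X (⟨(j : ℕ), h⟩ : Fin n) : MvPolynomial (Fin n) ℚ) else 0)
          (rename ⇑(extPerm σ) (rename ⇑ρ (monomial D₂ (1:ℚ))))
          = (aeval fun j : Fin (n + 1) =>
          if h : (j : ℕ) < n then (X (⟨(j : ℕ), h⟩ : Fin n) : MvPolynomial (Fin n) ℚ) else 0)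
          (rename ⇑(extPerm σ * ρ) (monomial D₂ (1:ℚ))) := by
        intro ρ _
        rw [rename_rename]
        rfl
      rw [map_sum, map_sum, Finset.sum_congr rfl h2, hinner σ]
    have hsum : ∀ σ : Equiv.Perm (Fin n),
        rename ⇑σ (∑ τ ∈ rowGroup n T, rename ⇑τ (pmonF n f T))
          = ∑ τ ∈ RG, rename ⇑(σ * τ) (pmonF n f T) := by
      intro σ
      rw [map_sum, hRGdef]
      refine Finset.sum_congr rfl fun τ _ => ?_
      rw [rename_rename]
      rfl
    rw [Finset.sum_congr rfl hterm, Finset.smul_sum]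
    refine Finset.sum_congr rfl fun σ _ => ?_
    rw [smul_comm, hsum σ]
  -- stabilizer counting
  have hidA : ∀ (Y : MvPolynomial (Fin (n+1)) ℚ), rename ⇑τ0⁻¹ (rename ⇑τ0 Y) = Y := by
    intro Y
    rw [rename_rename]
    rw [show (⇑τ0⁻¹ ∘ ⇑τ0) = id from funext fun x => τ0.symm_apply_apply x]
    exact rename_id_apply Y
  have hidB : ∀ (Y : MvPolynomial (Fin (n+1)) ℚ), rename ⇑τ0 (rename ⇑τ0⁻¹ Y) = Y := by
    intro Y
    rw [rename_rename]
    rw [show (⇑τ0 ∘ ⇑τ0⁻¹) = id from funext fun x => τ0.apply_symm_apply x]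
    exact rename_id_apply Y
  have hcomp3 : ∀ (ρ : Equiv.Perm (Fin (n+1))) (Y : MvPolynomial (Fin (n+1)) ℚ),
      rename ⇑(τ0⁻¹ * ρ * τ0) Y = rename ⇑τ0⁻¹ (rename ⇑ρ (rename ⇑τ0 Y)) := by
    intro ρ Y
    rw [rename_rename, rename_rename]
    rfl
  have hstabEq : stabCardF (n+1) (iotaHatFun f) T' = F0.card * stabCardF n f T := by
    unfold stabCardF
    rw [hq1]
    have hcard1 : ((rowGroup (n+1) T').filter
          (fun ρ : Equiv.Perm (Fin (n+1)) => rename ⇑ρ (monomial D₁ (1:ℚ)) = monomial D₁ 1)).card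
        = (RG'.filter fun ρ : Equiv.Perm (Fin (n+1)) => rename ⇑ρ (monomial D₂ (1:ℚ)) = monomial D₂ 1).card := by
      refine Finset.card_nbij' (fun ρ => τ0⁻¹ * ρ * τ0) (fun ρ => τ0 * ρ * τ0⁻¹) ?_ ?_ ?_ ?_
      · intro ρ hρ
        obtain ⟨hρ1, hρ2⟩ := Finset.mem_filter.mp hρ
        refine Finset.mem_filter.mpr ⟨mul_mem_rowGroup (mul_mem_rowGroup
          (inv_mem_rowGroup hτ0mem) hρ1) hτ0mem, ?_⟩
        rw [hq1q2] at hρ2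
        show rename ⇑(τ0⁻¹ * ρ * τ0) (monomial D₂ (1:ℚ)) = monomial D₂ 1
        rw [hcomp3, hρ2, hidA]
      · intro ρ hρ
        obtain ⟨hρ1, hρ2⟩ := Finset.mem_filter.mp hρ
        refine Finset.mem_filter.mpr ⟨mul_mem_rowGroup (mul_mem_rowGroup
          hτ0mem hρ1) (inv_mem_rowGroup hτ0mem), ?_⟩
        show rename ⇑(τ0 * ρ * τ0⁻¹) (monomial D₁ (1:ℚ)) = monomial D₁ 1
        rw [hq1q2]
        have hcomp3' : rename ⇑(τ0 * ρ * τ0⁻¹) (rename ⇑τ0 (monomial D₂ (1:ℚ)))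
            = rename ⇑τ0 (rename ⇑ρ (monomial D₂ (1:ℚ))) := by
          rw [rename_rename, rename_rename]
          have : (⇑(τ0 * ρ * τ0⁻¹) ∘ ⇑τ0) = (⇑τ0 ∘ ⇑ρ) := by
            funext x
            simp [Equiv.Perm.mul_apply]
          rw [this]
        rw [hcomp3', hρ2]
      · intro ρ _
        group
      · intro ρ _
        group
    rw [hcard1]
    have hsubset : (RG'.filter fun ρ : Equiv.Perm (Fin (n+1)) => rename ⇑ρ (monomial D₂ (1:ℚ)) = monomial D₂ 1)
        = (RG'.filter (fun ρ => D₂ (ρ⁻¹ (Fin.last n)) = 0)).filter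
            (fun ρ : Equiv.Perm (Fin (n+1)) => rename ⇑ρ (monomial D₂ (1:ℚ)) = monomial D₂ 1) := by
      rw [Finset.filter_filter]
      refine Finset.filter_congr fun ρ _ => ?_
      constructor
      · intro h
        refine ⟨?_, h⟩
        rw [rename_perm_monomial] at h
        have h2 := congrArg (fun (E : Fin (n+1) →₀ ℕ) => E (Fin.last n)) (monomial_one_inj h)
        simp only [mapDomain_perm] at h2
        rw [h2, hD2l]
      · exact fun h => h.2
    rw [hsubset, Finset.card_filter,
      hbij ℕ (fun ρ : Equiv.Perm (Fin (n+1)) => if rename ⇑ρ (monomial D₂ (1:ℚ)) = monomial D₂ 1 then 1 else 0),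
      Finset.sum_product]
    have hcond : ∀ τ, ∀ i0 ∈ F0, (rename ⇑(Ψ τ i0) (monomial D₂ (1:ℚ)) = monomial D₂ 1)
        ↔ rename ⇑τ (pmonF n f T) = pmonF n f T := by
      intro τ i0 hi0
      have h1 : rename ⇑(Ψ τ i0) (monomial D₂ (1:ℚ))
          = rename Fin.castSucc (rename ⇑τ (pmonF n f T)) := by
        have h := hmono 1 τ i0 hi0
        rwa [extPerm_one, one_mul, one_mul] at h
      have h2 : (monomial D₂ (1:ℚ)) = rename Fin.castSucc (pmonF n f T) := hq2.symm
      rw [h1, h2]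
      constructor
      · exact fun h => rename_injective _ (Fin.castSucc_injective n) h
      · exact fun h => by rw [h]
    have hstep : ∀ τ ∈ RG, (∑ i0 ∈ F0,
        if rename ⇑(Ψ τ i0) (monomial D₂ (1:ℚ)) = monomial D₂ 1 then 1 else 0)
        = F0.card * (if rename ⇑τ (pmonF n f T) = pmonF n f T then 1 else 0) := by
      intro τ _
      have : ∀ i0 ∈ F0, (if rename ⇑(Ψ τ i0) (monomial D₂ (1:ℚ)) = monomial D₂ 1
          then (1:ℕ) else 0)
          = (if rename ⇑τ (pmonF n f T) = pmonF n f T then 1 else 0) := by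
        intro i0 hi0
        by_cases hcc : rename ⇑τ (pmonF n f T) = pmonF n f T
        · rw [if_pos hcc, if_pos ((hcond τ i0 hi0).mpr hcc)]
        · rw [if_neg hcc, if_neg (fun hx => hcc ((hcond τ i0 hi0).mp hx))]
      rw [Finset.sum_congr rfl this, Finset.sum_const, smul_eq_mul]
    rw [Finset.sum_congr rfl hstep, ← Finset.mul_sum, ← Finset.card_filter]
  have hs_pos : 0 < stabCardF n f T := by
    unfold stabCardF
    refine Finset.card_pos.mpr ⟨1, Finset.mem_filter.mpr ⟨one_mem_rowGroup T, ?_⟩⟩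
    rw [show ⇑(1 : Equiv.Perm (Fin n)) = id from rfl]
    exact rename_id_apply _
  have hF0_pos : 0 < F0.card :=
    Finset.card_pos.mpr ⟨Fin.last n, (hmemF0 _).mpr ⟨by rw [hT'l], hD2l⟩⟩
  -- final assembly
  rw [part1, map_smul, hYS, hstabEq]
  unfold FMT FMTF
  rw [← hf]
  rw [smul_smul]
  congr 1
  rw [Nat.cast_mul, mul_inv, mul_comm ((F0.card : ℚ))⁻¹, mul_assoc, inv_mul_cancel₀, mul_one]
  exact Nat.cast_ne_zero.mpr hF0_pos.ne' 
end GHS
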